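/- Let n \geq 1 and let x_1, y_1, \ldots, x_n, y_n generate the algebra A over \mathbb{C}[q,q^{-1}] with relations x_k x_l = q x_l x_k, y_k y_l = q y_l y_k, y_k x_l = q^{-1} x_l y_k for k < l, and x_k y_l = q^{-1} y_l x_k for k \leq l. Then \Sigma_+ = \sum_{i=1}^n x_i and \Sigma_- = \sum_{i=1}^n y_i satisfy the quantum Serre relations of \widehat{\mathfrak{sl}}_2: \Sigma_{\pm}^3 \Sigma_{\mp} - (q+1+q^{-1})(\Sigma_{\pm}^2 \Sigma_{\mp} \Sigma_{\pm} - \Sigma_{\pm} \Sigma_{\mp} \Sigma_{\pm}^2) - \Sigma_{\mp} \Sigma_{\pm}^3 = 0. -/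

import Mathlib

open LaurentPolynomial

noncomputable def sgcq : LaurentPolynomial ℂ := T 1 + 1 + T (-1)

def sgeps (k d : ℕ) : ℤ := if k ≤ d then -1 else 1
def sgdlt (k l : ℕ) : ℤ := if k < l then 1 else if l < k then -1 else 0

set_option maxHeartbeats 4000000 in
lemma sgScalarId (a b c d : ℕ) :
    (T (sgeps a d + sgeps b d + sgeps c d) - sgcq * T (sgeps a d + sgeps b d) + sgcq * T (sgeps a d) - 1)
    + (T (sgeps a d + sgeps c d + sgeps b d) - sgcq * T (sgeps a d + sgeps c d) + sgcq * T (sgeps a d) - 1) * T (sgdlt c b)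
    + (T (sgeps b d + sgeps a d + sgeps c d) - sgcq * T (sgeps b d + sgeps a d) + sgcq * T (sgeps b d) - 1) * T (sgdlt b a)
    + (T (sgeps b d + sgeps c d + sgeps a d) - sgcq * T (sgeps b d + sgeps c d) + sgcq * T (sgeps b d) - 1) * T (sgdlt c a + sgdlt b a)
    + (T (sgeps c d + sgeps a d + sgeps b d) - sgcq * T (sgeps c d + sgeps a d) + sgcq * T (sgeps c d) - 1) * T (sgdlt c a + sgdlt c b)
    + (T (sgeps c d + sgeps b d + sgeps a d) - sgcq * T (sgeps c d + sgeps b d) + sgcq * T (sgeps c d) - 1) * T (sgdlt b a + (sgdlt c a + sgdlt c b))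
    = (0 : LaurentPolynomial ℂ) := by
  unfold sgeps sgdlt sgcq
  split_ifs <;>
    first
      | (exfalso; omega)
      | (simp only [mul_add, add_mul, mul_sub, sub_mul, mul_one, one_mul, ← T_add]; norm_num; try ring)

set_option maxHeartbeats 4000000 in
theorem sgSerre1 {A : Type*} [Ring A] [Algebra (LaurentPolynomial ℂ) A]
    (n : ℕ) (x y : Fin n → A)
    (hxx : ∀ k l : Fin n, k < l → x k * x l = (T 1 : LaurentPolynomial ℂ) • (x l * x k))
    (hyx : ∀ k l : Fin n, k < l → y k * x l = (T (-1) : LaurentPolynomial ℂ) • (x l * y k))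
    (hxy : ∀ k l : Fin n, k ≤ l → x k * y l = (T (-1) : LaurentPolynomial ℂ) • (y l * x k)) :
    ∀ Sp Sm : A, Sp = ∑ i, x i → Sm = ∑ i, y i →
      Sp ^ 3 * Sm - sgcq • (Sp ^ 2 * Sm * Sp - Sp * Sm * Sp ^ 2) - Sm * Sp ^ 3 = 0 := by
  intro Sp Sm hSp hSm
  -- uniform commutation rules
  have hxy2 : ∀ k d : Fin n, x k * y d = (T (sgeps k.1 d.1) : LaurentPolynomial ℂ) • (y d * x k) := by
    intro k d
    by_cases h : (k : ℕ) ≤ (d : ℕ)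
    · rw [sgeps, if_pos h]
      exact hxy k d (Fin.le_def.mpr h)
    · rw [sgeps, if_neg h]
      have hdk : d < k := Fin.lt_def.mpr (by omega)
      rw [hyx d k hdk, smul_smul, ← T_add]
      norm_num
  have hxx2 : ∀ k l : Fin n, x k * x l = (T (sgdlt k.1 l.1) : LaurentPolynomial ℂ) • (x l * x k) := by
    intro k l
    rcases lt_trichotomy k l with h | h | h
    · have h' : (k : ℕ) < l := Fin.lt_def.mp h
      rw [sgdlt, if_pos h']
      exact hxx k l h
    · subst h
      rw [sgdlt, if_neg (by omega), if_neg (by omega), T_zero, one_smul]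
    · have h' : (l : ℕ) < k := Fin.lt_def.mp h
      rw [sgdlt, if_neg (by omega), if_pos h', hxx l k h, smul_smul, ← T_add]
      norm_num
  have hxy3 : ∀ (k d : Fin n) (z : A),
      x k * (y d * z) = (T (sgeps k.1 d.1) : LaurentPolynomial ℂ) • (y d * (x k * z)) := by
    intro k d z
    rw [← mul_assoc, hxy2 k d, smul_mul_assoc, mul_assoc]
  have hxx3 : ∀ (k l : Fin n) (z : A),
      x k * (x l * z) = (T (sgdlt k.1 l.1) : LaurentPolynomial ℂ) • (x l * (x k * z)) := by
    intro k l z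
    rw [← mul_assoc, hxx2 k l, smul_mul_assoc, mul_assoc]
  -- normal-form lemmas, moving the y to the front
  have NA : ∀ a b c d : Fin n, x a * (x b * (x c * y d)) =
      (T (sgeps a.1 d.1 + sgeps b.1 d.1 + sgeps c.1 d.1) : LaurentPolynomial ℂ) •
        (y d * (x a * (x b * x c))) := by
    intro a b c d
    rw [hxy2 c d, mul_smul_comm, mul_smul_comm, hxy3 b d, mul_smul_comm, hxy3 a d,
      smul_smul, smul_smul, ← T_add, ← T_add,
      show sgeps c.1 d.1 + sgeps b.1 d.1 + sgeps a.1 d.1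
          = sgeps a.1 d.1 + sgeps b.1 d.1 + sgeps c.1 d.1 from by ring]
  have NB : ∀ a b c d : Fin n, x a * (x b * (y d * x c)) =
      (T (sgeps a.1 d.1 + sgeps b.1 d.1) : LaurentPolynomial ℂ) •
        (y d * (x a * (x b * x c))) := by
    intro a b c d
    rw [hxy3 b d, mul_smul_comm, hxy3 a d, smul_smul, ← T_add,
      show sgeps b.1 d.1 + sgeps a.1 d.1 = sgeps a.1 d.1 + sgeps b.1 d.1 from by ring]
  have NC : ∀ a b c d : Fin n, x a * (y d * (x b * x c)) =
      (T (sgeps a.1 d.1) : LaurentPolynomial ℂ) • (y d * (x a * (x b * x c))) := by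
    intro a b c d
    exact hxy3 a d (x b * x c)
  -- sorting lemmas for the x-part
  have MC : ∀ a b c d : Fin n, y d * (x a * (x c * x b)) =
      (T (sgdlt c.1 b.1) : LaurentPolynomial ℂ) • (y d * (x a * (x b * x c))) := by
    intro a b c d
    rw [hxx2 c b, mul_smul_comm, mul_smul_comm]
  have MB : ∀ a b c d : Fin n, y d * (x b * (x a * x c)) =
      (T (sgdlt b.1 a.1) : LaurentPolynomial ℂ) • (y d * (x a * (x b * x c))) := by
    intro a b c d
    rw [hxx3 b a, mul_smul_comm]
  have MD : ∀ a b c d : Fin n, y d * (x b * (x c * x a)) =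
      (T (sgdlt c.1 a.1 + sgdlt b.1 a.1) : LaurentPolynomial ℂ) •
        (y d * (x a * (x b * x c))) := by
    intro a b c d
    rw [hxx2 c a, mul_smul_comm, mul_smul_comm, MB a b c d, smul_smul, ← T_add]
  have ME : ∀ a b c d : Fin n, y d * (x c * (x a * x b)) =
      (T (sgdlt c.1 a.1 + sgdlt c.1 b.1) : LaurentPolynomial ℂ) •
        (y d * (x a * (x b * x c))) := by
    intro a b c d
    rw [hxx3 c a, mul_smul_comm, MC a b c d, smul_smul, ← T_add]
  have MF : ∀ a b c d : Fin n, y d * (x c * (x b * x a)) =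
      (T (sgdlt b.1 a.1 + (sgdlt c.1 a.1 + sgdlt c.1 b.1)) : LaurentPolynomial ℂ) •
        (y d * (x a * (x b * x c))) := by
    intro a b c d
    rw [hxx2 b a, mul_smul_comm, mul_smul_comm, ME a b c d, smul_smul, ← T_add]
  -- pointwise (symmetrized) Serre identity
  have key : ∀ a b c d : Fin n,
      (x a * (x b * (x c * y d)) - sgcq • (x a * (x b * (y d * x c)))
        + sgcq • (x a * (y d * (x b * x c))) - y d * (x a * (x b * x c)))
      + (x a * (x c * (x b * y d)) - sgcq • (x a * (x c * (y d * x b)))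
        + sgcq • (x a * (y d * (x c * x b))) - y d * (x a * (x c * x b)))
      + (x b * (x a * (x c * y d)) - sgcq • (x b * (x a * (y d * x c)))
        + sgcq • (x b * (y d * (x a * x c))) - y d * (x b * (x a * x c)))
      + (x b * (x c * (x a * y d)) - sgcq • (x b * (x c * (y d * x a)))
        + sgcq • (x b * (y d * (x c * x a))) - y d * (x b * (x c * x a)))
      + (x c * (x a * (x b * y d)) - sgcq • (x c * (x a * (y d * x b)))
        + sgcq • (x c * (y d * (x a * x b))) - y d * (x c * (x a * x b)))
      + (x c * (x b * (x a * y d)) - sgcq • (x c * (x b * (y d * x a)))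
        + sgcq • (x c * (y d * (x b * x a))) - y d * (x c * (x b * x a)))
      = 0 := by
    intro a b c d
    simp only [NA a b c d, NA a c b d, NA b a c d, NA b c a d, NA c a b d, NA c b a d,
      NB a b c d, NB a c b d, NB b a c d, NB b c a d, NB c a b d, NB c b a d,
      NC a b c d, NC a c b d, NC b a c d, NC b c a d, NC c a b d, NC c b a d,
      MC a b c d, MB a b c d, MD a b c d, ME a b c d, MF a b c d, smul_smul]
    match_scalars
    linear_combination sgScalarId a.1 b.1 c.1 d.1
  -- sum the pointwise identity over all quadruples
  have hzero : (∑ a, ∑ b, ∑ c, ∑ d,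
      (      (x a * (x b * (x c * y d)) - sgcq • (x a * (x b * (y d * x c)))
        + sgcq • (x a * (y d * (x b * x c))) - y d * (x a * (x b * x c)))
      + (x a * (x c * (x b * y d)) - sgcq • (x a * (x c * (y d * x b)))
        + sgcq • (x a * (y d * (x c * x b))) - y d * (x a * (x c * x b)))
      + (x b * (x a * (x c * y d)) - sgcq • (x b * (x a * (y d * x c)))
        + sgcq • (x b * (y d * (x a * x c))) - y d * (x b * (x a * x c)))
      + (x b * (x c * (x a * y d)) - sgcq • (x b * (x c * (y d * x a)))
        + sgcq • (x b * (y d * (x c * x a))) - y d * (x b * (x c * x a)))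
      + (x c * (x a * (x b * y d)) - sgcq • (x c * (x a * (y d * x b)))
        + sgcq • (x c * (y d * (x a * x b))) - y d * (x c * (x a * x b)))
      + (x c * (x b * (x a * y d)) - sgcq • (x c * (x b * (y d * x a)))
        + sgcq • (x c * (y d * (x b * x a))) - y d * (x c * (x b * x a))))) = (0 : A) :=
    Finset.sum_eq_zero fun a _ => Finset.sum_eq_zero fun b _ => Finset.sum_eq_zero fun c _ =>
      Finset.sum_eq_zero fun d _ => key a b c d
  have hsplit : (∑ a, ∑ b, ∑ c, ∑ d,
      (      (x a * (x b * (x c * y d)) - sgcq • (x a * (x b * (y d * x c)))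
        + sgcq • (x a * (y d * (x b * x c))) - y d * (x a * (x b * x c)))
      + (x a * (x c * (x b * y d)) - sgcq • (x a * (x c * (y d * x b)))
        + sgcq • (x a * (y d * (x c * x b))) - y d * (x a * (x c * x b)))
      + (x b * (x a * (x c * y d)) - sgcq • (x b * (x a * (y d * x c)))
        + sgcq • (x b * (y d * (x a * x c))) - y d * (x b * (x a * x c)))
      + (x b * (x c * (x a * y d)) - sgcq • (x b * (x c * (y d * x a)))
        + sgcq • (x b * (y d * (x c * x a))) - y d * (x b * (x c * x a)))
      + (x c * (x a * (x b * y d)) - sgcq • (x c * (x a * (y d * x b)))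
        + sgcq • (x c * (y d * (x a * x b))) - y d * (x c * (x a * x b)))
      + (x c * (x b * (x a * y d)) - sgcq • (x c * (x b * (y d * x a)))
        + sgcq • (x c * (y d * (x b * x a))) - y d * (x c * (x b * x a))))) =
      (Sp * (Sp * (Sp * Sm)) - sgcq • (Sp * (Sp * (Sm * Sp))) + sgcq • (Sp * (Sm * (Sp * Sp))) - Sm * (Sp * (Sp * Sp))) + (Sp * (Sp * (Sp * Sm)) - sgcq • (Sp * (Sp * (Sm * Sp))) + sgcq • (Sp * (Sm * (Sp * Sp))) - Sm * (Sp * (Sp * Sp))) + (Sp * (Sp * (Sp * Sm)) - sgcq • (Sp * (Sp * (Sm * Sp))) + sgcq • (Sp * (Sm * (Sp * Sp))) - Sm * (Sp * (Sp * Sp))) + (Sp * (Sp * (Sp * Sm)) - sgcq • (Sp * (Sp * (Sm * Sp))) + sgcq • (Sp * (Sm * (Sp * Sp))) - Sm * (Sp * (Sp * Sp))) + (Sp * (Sp * (Sp * Sm)) - sgcq • (Sp * (Sp * (Sm * Sp))) + sgcq • (Sp * (Sm * (Sp * Sp))) - Sm * (Sp * (Sp * Sp))) + (Sp * (Sp *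 (Sp * Sm)) - sgcq • (Sp * (Sp * (Sm * Sp))) + sgcq • (Sp * (Sm * (Sp * Sp))) - Sm * (Sp * (Sp * Sp))) := by
    subst hSp
    subst hSm
    simp only [Finset.sum_add_distrib, Finset.sum_sub_distrib, ← Finset.mul_sum,
      ← Finset.sum_mul, ← Finset.smul_sum]
  have h6 : (Sp * (Sp * (Sp * Sm)) - sgcq • (Sp * (Sp * (Sm * Sp))) + sgcq • (Sp * (Sm * (Sp * Sp))) - Sm * (Sp * (Sp * Sp))) + (Sp * (Sp * (Sp * Sm)) - sgcq • (Sp * (Sp * (Sm * Sp))) + sgcq • (Sp * (Sm * (Sp * Sp))) - Sm * (Sp * (Sp * Sp))) + (Sp * (Sp * (Sp * Sm)) - sgcq • (Sp * (Sp * (Sm * Sp))) + sgcq • (Sp * (Sm * (Sp * Sp))) - Sm * (Sp * (Sp * Sp))) + (Sp * (Sp * (Sp * Sm)) - sgcq • (Sp * (Sp * (Sm * Sp))) + sgcq • (Sp * (Sm * (Sp * Sp))) - Sm * (Sp * (Sp * Sp))) + (Sp * (Sp * (Sp * Sm)) - sgcq • (Sp * (Sp * (Sm * Sp))) + sgcq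 • (Sp * (Sm * (Sp * Sp))) - Sm * (Sp * (Sp * Sp))) + (Sp * (Sp * (Sp * Sm)) - sgcq • (Sp * (Sp * (Sm * Sp))) + sgcq • (Sp * (Sm * (Sp * Sp))) - Sm * (Sp * (Sp * Sp)))
      = (0 : A) := by rw [← hsplit]; exact hzero
  have hgen : ∀ S : A, S + S + S + S + S + S = 0 → S = 0 := by
    intro S hS
    have h8 : (6 : LaurentPolynomial ℂ) • S = 0 := by
      rw [show (6 : LaurentPolynomial ℂ) • S = S + S + S + S + S + S from by module]
      exact hS
    have h9 : ((C (6⁻¹ : ℂ) : LaurentPolynomial ℂ) * 6) = (1 : LaurentPolynomial ℂ) := by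
      rw [← map_ofNat (C : ℂ →+* LaurentPolynomial ℂ) 6, ← map_mul]
      norm_num
    calc S = ((C (6⁻¹ : ℂ) : LaurentPolynomial ℂ) * 6) • S := by rw [h9, one_smul]
      _ = (C (6⁻¹ : ℂ) : LaurentPolynomial ℂ) • ((6 : LaurentPolynomial ℂ) • S) := by
          rw [mul_smul]
      _ = 0 := by rw [h8, smul_zero]
  have hS' : (Sp * (Sp * (Sp * Sm)) - sgcq • (Sp * (Sp * (Sm * Sp))) + sgcq • (Sp * (Sm * (Sp * Sp))) - Sm * (Sp * (Sp * Sp))) = (0 : A) := hgen _ h6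
  have h10 : Sp ^ 3 * Sm - sgcq • (Sp ^ 2 * Sm * Sp - Sp * Sm * Sp ^ 2) - Sm * Sp ^ 3
      = (Sp * (Sp * (Sp * Sm)) - sgcq • (Sp * (Sp * (Sm * Sp))) + sgcq • (Sp * (Sm * (Sp * Sp))) - Sm * (Sp * (Sp * Sp))) := by
    simp only [pow_succ, pow_zero, one_mul, mul_assoc]
    module
  rw [h10]
  exact hS'

/-- in the algebra over `ℂ[q,q⁻¹]` generated by `x₁,y₁,…,x_n,y_n` with
the discrete sine-Gordon relations, the finite screening charges `Σ₊ = ∑ x_i` and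
`Σ₋ = ∑ y_i` satisfy the quantum Serre relations of `\widehat{sl}₂`. -/
theorem statement10 {A : Type*} [Ring A] [Algebra (LaurentPolynomial ℂ) A]
    (n : ℕ) (x y : Fin n → A)
    (hxx : ∀ k l : Fin n, k < l → x k * x l = (T 1 : LaurentPolynomial ℂ) • (x l * x k))
    (hyy : ∀ k l : Fin n, k < l → y k * y l = (T 1 : LaurentPolynomial ℂ) • (y l * y k))
    (hyx : ∀ k l : Fin n, k < l → y k * x l = (T (-1) : LaurentPolynomial ℂ) • (x l * y k))
    (hxy : ∀ k l : Fin n, k ≤ l → x k * y l = (T (-1) : LaurentPolynomial ℂ) • (y l * x k)) :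
    ∀ Sp Sm : A, Sp = ∑ i, x i → Sm = ∑ i, y i →
      (Sp ^ 3 * Sm - ((T 1 + 1 + T (-1) : LaurentPolynomial ℂ)) •
          (Sp ^ 2 * Sm * Sp - Sp * Sm * Sp ^ 2) - Sm * Sp ^ 3 = 0) ∧
      (Sm ^ 3 * Sp - ((T 1 + 1 + T (-1) : LaurentPolynomial ℂ)) •
          (Sm ^ 2 * Sp * Sm - Sm * Sp * Sm ^ 2) - Sp * Sm ^ 3 = 0) := by
  intro Sp Sm hSp hSm
  rw [show (T 1 + 1 + T (-1) : LaurentPolynomial ℂ) = sgcq from rfl]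
  constructor
  · exact sgSerre1 n x y hxx hyx hxy Sp Sm hSp hSm
  · -- work in the opposite algebra with reversed indices
    have hsum : ∀ g : Fin n → A,
        (∑ i : Fin n, MulOpposite.op (g i.rev)) = MulOpposite.op (∑ i, g i) := by
      intro g
      rw [show (∑ i : Fin n, MulOpposite.op (g i.rev)) = ∑ i : Fin n, MulOpposite.op (g i) by
        exact Equiv.sum_comp Fin.revPerm (fun j => MulOpposite.op (g j))]
      exact (map_sum (MulOpposite.opAddEquiv : A ≃+ Aᵐᵒᵖ) g Finset.univ).symm
    have H2 := sgSerre1 (A := Aᵐᵒᵖ) n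
      (fun i => MulOpposite.op (y i.rev)) (fun i => MulOpposite.op (x i.rev))
      (by
        intro k l h
        rw [← MulOpposite.op_mul, hyy l.rev k.rev (Fin.rev_lt_rev.mpr h),
          MulOpposite.op_smul, MulOpposite.op_mul])
      (by
        intro k l h
        rw [← MulOpposite.op_mul, hyx l.rev k.rev (Fin.rev_lt_rev.mpr h),
          MulOpposite.op_smul, MulOpposite.op_mul])
      (by
        intro k l h
        rw [← MulOpposite.op_mul, hxy l.rev k.rev (Fin.rev_le_rev.mpr h),
          MulOpposite.op_smul, MulOpposite.op_mul])
      (MulOpposite.op Sm) (MulOpposite.op Sp)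
      (by rw [hSm, ← hsum y]) (by rw [hSp, ← hsum x])
    have H3 := congrArg MulOpposite.unop H2
    simp only [MulOpposite.unop_sub, MulOpposite.unop_smul, MulOpposite.unop_mul,
      MulOpposite.unop_pow, MulOpposite.unop_op, MulOpposite.unop_zero] at H3
    have h11 : Sm ^ 3 * Sp - sgcq • (Sm ^ 2 * Sp * Sm - Sm * Sp * Sm ^ 2) - Sp * Sm ^ 3
        = -(Sp * Sm ^ 3 - sgcq • (Sm * (Sp * Sm ^ 2) - Sm ^ 2 * (Sp * Sm)) - Sm ^ 3 * Sp) := by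
      simp only [mul_assoc]
      module
    rw [h11, H3, neg_zero]
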